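/- Let λ be a probability measure on X and suppose the transition kernel satisfies Q(·|x,a) ≪ λ for all (x,a). If the initial distribution η is absolutely continuous with respect to λ, then the X-marginal μ^X_{η,π₁,π₂} of the occupation measure of any pair of history-dependent policies is absolutely continuous with respect to λ; if moreover η is equivalent to λ, then μ^X_{η,π₁,π₂} is equivalent to λ. -/

import Mathlib

open MeasureTheory ProbabilityTheory Filter Topology
open scoped NNReal ENNReal

universe u

/-- The space of histories `H_t = (X × A₁ × A₂)^t × X`, built recursively:
`H_0 = X` and `H_{t+1} = H_t × (A₁ × A₂) × X`. -/
def Hist (X A₁ A₂ : Type u) : ℕ → Type u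
  | 0 => X
  | t + 1 => Hist X A₁ A₂ t × (A₁ × A₂) × X

noncomputable instance histMeasurableSpace {X A₁ A₂ : Type u} [MeasurableSpace X]
    [MeasurableSpace A₁] [MeasurableSpace A₂] :
    ∀ t, MeasurableSpace (Hist X A₁ A₂ t)
  | 0 => ‹MeasurableSpace X›
  | t + 1 =>
    letI := histMeasurableSpace (X := X) (A₁ := A₁) (A₂ := A₂) t
    inferInstanceAs (MeasurableSpace (Hist X A₁ A₂ t × (A₁ × A₂) × X))

/-- The current state `x_t` of a history `h_t ∈ H_t`. -/
def curState {X A₁ A₂ : Type u} : ∀ t, Hist X A₁ A₂ t → X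
  | 0 => id
  | _ + 1 => fun h => h.2.2

lemma measurable_curState {X A₁ A₂ : Type u} [MeasurableSpace X]
    [MeasurableSpace A₁] [MeasurableSpace A₂] :
    ∀ t, Measurable (curState (X := X) (A₁ := A₁) (A₂ := A₂) t)
  | 0 => measurable_id
  | _ + 1 => measurable_snd.comp measurable_snd

/-- The distribution on histories `H_t` induced by the initial distribution `η`, the
transition kernel `Q` and the history-dependent policies `(π₁, π₂)`: the initial state has
distribution `η`, at each stage the actions are drawn independently from `π₁^t(·|h_t)` and
`π₂^t(·|h_t)`, and the next state from `Q(·|x_t, a_t, b_t)`. -/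
noncomputable def traj {X A₁ A₂ : Type u} [MeasurableSpace X]
    [MeasurableSpace A₁] [MeasurableSpace A₂]
    (η : Measure X) (Q : Kernel (X × A₁ × A₂) X)
    (π₁ : ∀ t, Kernel (Hist X A₁ A₂ t) A₁) (π₂ : ∀ t, Kernel (Hist X A₁ A₂ t) A₂) :
    ∀ t, Measure (Hist X A₁ A₂ t)
  | 0 => η
  | t + 1 =>
    (traj η Q π₁ π₂ t) ⊗ₘ
      ((π₁ t ×ₖ π₂ t) ⊗ₖ
        (Q.comap (fun p : Hist X A₁ A₂ t × (A₁ × A₂) => (curState t p.1, p.2))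
          (((measurable_curState t).comp measurable_fst).prodMk measurable_snd)))

/-- The joint law of the state-action triple `(X_t, A_t, B_t)` at time `t`. -/
noncomputable def stepLaw {X A₁ A₂ : Type u} [MeasurableSpace X]
    [MeasurableSpace A₁] [MeasurableSpace A₂]
    (η : Measure X) (Q : Kernel (X × A₁ × A₂) X)
    (π₁ : ∀ t, Kernel (Hist X A₁ A₂ t) A₁) (π₂ : ∀ t, Kernel (Hist X A₁ A₂ t) A₂)
    (t : ℕ) : Measure (X × A₁ × A₂) :=
  (traj η Q π₁ π₂ (t + 1)).map
    (fun h : Hist X A₁ A₂ t × (A₁ × A₂) × X => (curState t h.1, h.2.1))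

/-- The occupation measure of the pair of history-dependent policies `(π₁, π₂)` with initial
distribution `η`: `μ_{η,π₁,π₂} = (1-β) ∑_t β^t law(X_t, A_t, B_t)`. -/
noncomputable def occHD {X A₁ A₂ : Type u} [MeasurableSpace X]
    [MeasurableSpace A₁] [MeasurableSpace A₂]
    (β : ℝ≥0) (η : Measure X) (Q : Kernel (X × A₁ × A₂) X)
    (π₁ : ∀ t, Kernel (Hist X A₁ A₂ t) A₁) (π₂ : ∀ t, Kernel (Hist X A₁ A₂ t) A₂) :
    Measure (X × A₁ × A₂) :=
  Measure.sum fun t : ℕ => ((1 - β) * β ^ t) • stepLaw η Q π₁ π₂ t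


section aux
variable {X A₁ A₂ : Type u} [MeasurableSpace X] [MeasurableSpace A₁] [MeasurableSpace A₂]
  (η : Measure X) [IsProbabilityMeasure η]
  (Q : Kernel (X × A₁ × A₂) X) [IsMarkovKernel Q]
  (π₁ : ∀ t, Kernel (Hist X A₁ A₂ t) A₁) (π₂ : ∀ t, Kernel (Hist X A₁ A₂ t) A₂)

/-- The kernel used at stage `t` of the trajectory construction. -/
noncomputable def stageKer (t : ℕ) : Kernel (Hist X A₁ A₂ t) ((A₁ × A₂) × X) :=
  (π₁ t ×ₖ π₂ t) ⊗ₖ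
    (Q.comap (fun p : Hist X A₁ A₂ t × (A₁ × A₂) => (curState t p.1, p.2))
      (((measurable_curState t).comp measurable_fst).prodMk measurable_snd))

lemma stageKer_markov (hm₁ : ∀ t, IsMarkovKernel (π₁ t)) (hm₂ : ∀ t, IsMarkovKernel (π₂ t))
    (t : ℕ) : IsMarkovKernel (stageKer Q π₁ π₂ t) := by
  haveI := hm₁ t; haveI := hm₂ t
  rw [stageKer]
  infer_instance

lemma traj_succ_eq (t : ℕ) :
    traj η Q π₁ π₂ (t + 1) = (traj η Q π₁ π₂ t) ⊗ₘ stageKer Q π₁ π₂ t := rfl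

lemma traj_prob (hm₁ : ∀ t, IsMarkovKernel (π₁ t)) (hm₂ : ∀ t, IsMarkovKernel (π₂ t)) :
    ∀ t, IsProbabilityMeasure (traj η Q π₁ π₂ t) := by
  intro t
  induction t with
  | zero => rw [traj]; exact ‹IsProbabilityMeasure η›
  | succ t ih =>
    haveI := stageKer_markov Q π₁ π₂ hm₁ hm₂ t
    haveI := ih
    rw [traj_succ_eq]
    exact inferInstanceAs
      (IsProbabilityMeasure ((traj η Q π₁ π₂ t) ⊗ₘ stageKer Q π₁ π₂ t))

lemma stepLaw_fst (hm₁ : ∀ t, IsMarkovKernel (π₁ t)) (hm₂ : ∀ t, IsMarkovKernel (π₂ t))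
    (t : ℕ) :
    (stepLaw η Q π₁ π₂ t).map Prod.fst = (traj η Q π₁ π₂ t).map (curState t) := by
  haveI := stageKer_markov Q π₁ π₂ hm₁ hm₂ t
  haveI := traj_prob η Q π₁ π₂ hm₁ hm₂ t
  have hmm : Measurable (fun h : Hist X A₁ A₂ t × (A₁ × A₂) × X => (curState t h.1, h.2.1)) :=
    ((measurable_curState t).comp measurable_fst).prodMk (measurable_fst.comp measurable_snd)
  rw [stepLaw]
  show Measure.map Prod.fst (Measure.map (fun h : Hist X A₁ A₂ t × (A₁ × A₂) × X => (curState t h.1, h.2.1))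
    ((traj η Q π₁ π₂ t) ⊗ₘ stageKer Q π₁ π₂ t)) = _
  rw [Measure.map_map measurable_fst hmm]
  have h1 : (Prod.fst ∘ fun h : Hist X A₁ A₂ t × (A₁ × A₂) × X => (curState t h.1, h.2.1))
      = curState t ∘ Prod.fst := rfl
  rw [h1, ← Measure.map_map (measurable_curState t) measurable_fst]
  congr 1
  have key : ((traj η Q π₁ π₂ t) ⊗ₘ stageKer Q π₁ π₂ t).map Prod.fst = traj η Q π₁ π₂ t := by
    rw [← Measure.fst, Measure.fst_compProd]
  exact key

lemma traj_succ_ac (hm₁ : ∀ t, IsMarkovKernel (π₁ t)) (hm₂ : ∀ t, IsMarkovKernel (π₂ t))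
    (lam : Measure X) (hQ : ∀ q, Q q ≪ lam) (t : ℕ) :
    (traj η Q π₁ π₂ (t + 1)).map (curState (t + 1)) ≪ lam := by
  haveI := hm₁ t; haveI := hm₂ t
  haveI := stageKer_markov Q π₁ π₂ hm₁ hm₂ t
  haveI := traj_prob η Q π₁ π₂ hm₁ hm₂ t
  refine Measure.AbsolutelyContinuous.mk fun S hS hS0 => ?_
  rw [Measure.map_apply (measurable_curState _) hS]
  have hS2 : MeasurableSet ((fun p : Hist X A₁ A₂ t × (A₁ × A₂) × X => p.2.2) ⁻¹' S) :=
    (measurable_snd.comp measurable_snd) hS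
  have key : ((traj η Q π₁ π₂ t) ⊗ₘ stageKer Q π₁ π₂ t)
      ((fun p : Hist X A₁ A₂ t × (A₁ × A₂) × X => p.2.2) ⁻¹' S) = 0 := by
    rw [Measure.compProd_apply hS2,
      lintegral_eq_zero_iff (Kernel.measurable_kernel_prodMk_left hS2)]
    refine Filter.Eventually.of_forall fun h => ?_
    show stageKer Q π₁ π₂ t h _ = (0 : ℝ≥0∞)
    have hpre : (Prod.mk h ⁻¹'
        ((fun p : Hist X A₁ A₂ t × (A₁ × A₂) × X => p.2.2) ⁻¹' S)) = Prod.snd ⁻¹' S := rfl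
    rw [hpre, stageKer, Kernel.compProd_apply (measurable_snd hS)]
    have hz : ∀ b : A₁ × A₂, Q (curState t h, b) S = 0 := fun b => hQ _ hS0
    simp only [Kernel.comap_apply, Set.mem_preimage, Set.setOf_mem_eq]
    simp [show ∀ b : A₁ × A₂, Prod.mk b ⁻¹' (Prod.snd ⁻¹' S) = S from fun b => rfl, hz]
  exact key

lemma stepLaw_fst_ac (hm₁ : ∀ t, IsMarkovKernel (π₁ t)) (hm₂ : ∀ t, IsMarkovKernel (π₂ t))
    (lam : Measure X) (hQ : ∀ q, Q q ≪ lam) (hη : η ≪ lam) (t : ℕ) :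
    (stepLaw η Q π₁ π₂ t).map Prod.fst ≪ lam := by
  rw [stepLaw_fst η Q π₁ π₂ hm₁ hm₂ t]
  cases t with
  | zero =>
    have h0 : (traj η Q π₁ π₂ 0).map (curState 0) = η := by
      show η.map id = η
      simp
    rw [h0]; exact hη
  | succ t => exact traj_succ_ac η Q π₁ π₂ hm₁ hm₂ lam hQ t

end aux

/-- Suppose `Q(·|x,a) ≪ λ` for all `(x,a)`. If the initial distribution
`η ≪ λ`, then the `X`-marginal of the occupation measure of any pair of history-dependent
policies satisfies `μ^X_{η,π₁,π₂} ≪ λ`; if moreover `η ∼ λ`, then `μ^X_{η,π₁,π₂} ∼ λ`. -/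
theorem stmt8 {X A₁ A₂ : Type u} [MeasurableSpace X]
    [MetricSpace A₁] [CompactSpace A₁] [MeasurableSpace A₁] [BorelSpace A₁]
    [MetricSpace A₂] [CompactSpace A₂] [MeasurableSpace A₂] [BorelSpace A₂]
    (β : ℝ≥0) (hβ0 : 0 < β) (hβ1 : β < 1)
    (lam : Measure X) [IsProbabilityMeasure lam]
    (η : Measure X) [IsProbabilityMeasure η]
    (Q : Kernel (X × A₁ × A₂) X) [IsMarkovKernel Q]
    (hQ : ∀ q, Q q ≪ lam)
    (π₁ : ∀ t, Kernel (Hist X A₁ A₂ t) A₁) (π₂ : ∀ t, Kernel (Hist X A₁ A₂ t) A₂)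
    (hm₁ : ∀ t, IsMarkovKernel (π₁ t)) (hm₂ : ∀ t, IsMarkovKernel (π₂ t)) :
    (η ≪ lam → (occHD β η Q π₁ π₂).map Prod.fst ≪ lam) ∧
    (η ≪ lam → lam ≪ η →
      (occHD β η Q π₁ π₂).map Prod.fst ≪ lam ∧ lam ≪ (occHD β η Q π₁ π₂).map Prod.fst) := by
  have hfwd : η ≪ lam → (occHD β η Q π₁ π₂).map Prod.fst ≪ lam := by
    intro hη
    refine Measure.AbsolutelyContinuous.mk fun S hS hS0 => ?_
    rw [Measure.map_apply measurable_fst hS, occHD,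
      Measure.sum_apply _ (measurable_fst hS)]
    refine ENNReal.tsum_eq_zero.mpr fun t => ?_
    have h0 : stepLaw η Q π₁ π₂ t (Prod.fst ⁻¹' S) = 0 := by
      have h1 := stepLaw_fst_ac η Q π₁ π₂ hm₁ hm₂ lam hQ hη t hS0
      rwa [Measure.map_apply measurable_fst hS] at h1
    simp [h0]
  refine ⟨hfwd, fun hη hlη => ⟨hfwd hη, ?_⟩⟩
  refine hlη.trans (Measure.AbsolutelyContinuous.mk fun S hS hS0 => ?_)
  rw [Measure.map_apply measurable_fst hS, occHD,
    Measure.sum_apply _ (measurable_fst hS)] at hS0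
  have h0 := ENNReal.tsum_eq_zero.mp hS0 0
  simp only [pow_zero, mul_one, Measure.smul_apply, smul_eq_mul] at h0
  have hc : ((1 - β : ℝ≥0) : ℝ≥0∞) ≠ 0 := by
    simp only [ne_eq, ENNReal.coe_eq_zero]
    exact (tsub_pos_of_lt hβ1).ne'
  have h1 : stepLaw η Q π₁ π₂ 0 (Prod.fst ⁻¹' S) = 0 := by
    rcases mul_eq_zero.mp h0 with h | h
    · exact absurd h hc
    · exact h
  have h2 : (stepLaw η Q π₁ π₂ 0).map Prod.fst S = 0 := by
    rwa [Measure.map_apply measurable_fst hS]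
  rw [stepLaw_fst η Q π₁ π₂ hm₁ hm₂ 0] at h2
  have h3 : (traj η Q π₁ π₂ 0).map (curState 0) = η := by
    show η.map id = η
    simp
  rw [h3] at h2
  exact h2
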